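/- Let g : ℝ² \ {0} → ℂ be measurable and radially symmetric (g(η) depends only on |η|), and let ξ ∈ ℝ² \ {0} be such that ∫_{ℝ²} |g(η)| |g(ξ−η)| dη < ∞. Then ∫_{ℝ²} sign(ξ×η) g(η) g(ξ−η) sin(θ(ξ,η) − θ(ξ,ξ−η)) dη = 0, where ξ×η := ξ₁η₂ − ξ₂η₁, sign is the sign function (with sign(0) = 0), and θ(u,w) ∈ [0,π] is the Euclidean angle between nonzero vectors u, w ∈ ℝ². -/

import Mathlib

open MeasureTheory Set RealInnerProductSpace

/-- The planar cross product `ξ×η = ξ₁η₂ − ξ₂η₁`. -/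
noncomputable def cross (ξ η : EuclideanSpace ℝ (Fin 2)) : ℝ := ξ 0 * η 1 - ξ 1 * η 0

theorem stmt18 (g : EuclideanSpace ℝ (Fin 2) → ℂ) (hmeas : Measurable g)
    (hrad : ∀ η η' : EuclideanSpace ℝ (Fin 2), ‖η‖ = ‖η'‖ → g η = g η')
    (ξ : EuclideanSpace ℝ (Fin 2)) (hξ : ξ ≠ 0)
    (hint : Integrable (fun η => ‖g η‖ * ‖g (ξ - η)‖)
      (volume : Measure (EuclideanSpace ℝ (Fin 2)))) :
    ∫ η : EuclideanSpace ℝ (Fin 2),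
      (Real.sign (cross ξ η) *
        Real.sin (InnerProductGeometry.angle ξ η - InnerProductGeometry.angle ξ (ξ - η))) •
        (g η * g (ξ - η)) = 0 := by
  set K : Submodule ℝ (EuclideanSpace ℝ (Fin 2)) := ℝ ∙ ξ with hK
  set R : EuclideanSpace ℝ (Fin 2) ≃ₗᵢ[ℝ] EuclideanSpace ℝ (Fin 2) := K.reflection with hR
  set f : EuclideanSpace ℝ (Fin 2) → ℂ := fun η =>
      (Real.sign (cross ξ η) *
        Real.sin (InnerProductGeometry.angle ξ η - InnerProductGeometry.angle ξ (ξ - η))) •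
        (g η * g (ξ - η)) with hf
  have hRξ : R ξ = ξ := K.reflection_mem_subspace_eq_self (Submodule.mem_span_singleton_self ξ)
  -- cross ξ (R η) = - cross ξ η
  have hcross : ∀ η, cross ξ (R η) = - cross ξ η := by
    intro η
    have hmem : R η + η ∈ K := by
      have h2 : R η + η = (K.starProjection η : EuclideanSpace ℝ (Fin 2))
          + (K.starProjection η : EuclideanSpace ℝ (Fin 2)) := by
        rw [hR, K.reflection_apply, two_smul]; abel
      rw [h2]
      exact K.add_mem (K.orthogonalProjectionOnto η).2 (K.orthogonalProjectionOnto η).2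
    obtain ⟨c, hc⟩ := Submodule.mem_span_singleton.mp hmem
    have hcross_smul : cross ξ (c • ξ) = 0 := by
      simp only [cross, PiLp.smul_apply, smul_eq_mul]
      ring
    have hadd : cross ξ (R η) + cross ξ η = cross ξ (R η + η) := by
      simp only [cross, PiLp.add_apply]; ring
    rw [hc] at hcross_smul
    linarith [hadd, hcross_smul]
  have hang : ∀ η, InnerProductGeometry.angle ξ (R η) = InnerProductGeometry.angle ξ η := by
    intro η
    have hi : (inner ℝ ξ (R η) : ℝ) = inner ℝ ξ η := by
      conv_lhs => rw [← hRξ]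
      exact R.inner_map_map ξ η
    rw [InnerProductGeometry.angle, InnerProductGeometry.angle, hi, R.norm_map]
  have hg : ∀ η, g (R η) = g η := fun η => hrad _ _ (R.norm_map η)
  have hkey : ∀ η, f (R η) = - f η := by
    intro η
    have h1 : ξ - R η = R (ξ - η) := by rw [map_sub, hRξ]
    simp only [hf, h1, hcross, hang, hg, Real.sign_neg, neg_mul, neg_smul]
  have hMP : MeasurePreserving R volume volume := R.measurePreserving
  have hcomp : ∫ η, f (R η) = ∫ η, f η :=
    hMP.integral_comp (R.toHomeomorph.measurableEmbedding) f
  simp only [hkey] at hcomp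
  rw [integral_neg] at hcomp
  have h2 : (2:ℂ) * ∫ η, f η = 0 := by linear_combination - hcomp
  simpa using h2
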